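/- Let K be an algebraically closed field of characteristic p, let q be a power of p, and let η ∈ K satisfy η^q + η = 0. Then the set {(x, z) ∈ K × K : z^q + z = x^(q+1), x^(q²) = x, z^(q²) = z + η} is finite with cardinality q³ if η = 0, and is empty if η ≠ 0. -/

import Mathlib

open Polynomial

lemma aux_card_roots {K : Type*} [Field K] [IsAlgClosed K] [DecidableEq K] (g : K[X])
    (hsep : g.Separable) : g.roots.toFinset.card = g.natDegree := by
  rw [Multiset.toFinset_card_of_nodup (nodup_roots hsep),
    (Polynomial.splits_iff_card_roots).mp (IsAlgClosed.splits g)]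

/-- Point count for the fixed points of `(-η) ∘ Fr_{q²}` on the curve `z^q + z = x^(q+1)`
over an algebraically closed field of characteristic `p`: the solution set of
`z^q + z = x^(q+1)`, `x^(q²) = x`, `z^(q²) = z + η` has `q³` elements if `η = 0` and is
empty otherwise. -/
theorem card_fixed_points_hermitian_curve
    (p : ℕ) (hp : p.Prime) (K : Type*) [Field K] [IsAlgClosed K] [CharP K p]
    (f : ℕ) (hf : 1 ≤ f) (q : ℕ) (hq : q = p ^ f)
    (η : K) (hη : η ^ q + η = 0) :
    (η = 0 →
      ({xz : K × K | xz.2 ^ q + xz.2 = xz.1 ^ (q + 1) ∧ xz.1 ^ (q ^ 2) = xz.1 ∧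
        xz.2 ^ (q ^ 2) = xz.2 + η}).Finite ∧
      ({xz : K × K | xz.2 ^ q + xz.2 = xz.1 ^ (q + 1) ∧ xz.1 ^ (q ^ 2) = xz.1 ∧
        xz.2 ^ (q ^ 2) = xz.2 + η}).ncard = q ^ 3) ∧
    (η ≠ 0 →
      {xz : K × K | xz.2 ^ q + xz.2 = xz.1 ^ (q + 1) ∧ xz.1 ^ (q ^ 2) = xz.1 ∧
        xz.2 ^ (q ^ 2) = xz.2 + η} = ∅) := by
  classical
  haveI := Fact.mk hp
  have hq2 : 2 ≤ q := by
    have : 1 < p ^ f := Nat.one_lt_pow (by omega) hp.one_lt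
    omega
  have hqK : (q : K) = 0 := by
    rw [hq]; exact (CharP.cast_eq_zero_iff K p _).mpr (dvd_pow_self p (by omega))
  -- Frobenius additivity for exponent q
  have frob_add : ∀ a b : K, (a + b) ^ q = a ^ q + b ^ q := by
    intro a b; rw [hq]; exact add_pow_char_pow a b p f
  have frob_sub : ∀ a b : K, (a - b) ^ q = a ^ q - b ^ q := by
    intro a b
    have h := frob_add (a - b) b
    rw [sub_add_cancel] at h
    linear_combination -h
  -- key power identity
  have hxpow : ∀ x : K, x ^ (q ^ 2) = x → x ^ ((q + 1) * q) = x ^ (q + 1) := by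
    intro x h2
    have e : (q + 1) * q = q ^ 2 + q := by ring
    rw [e, pow_add, h2]; ring
  constructor
  · -- η = 0 case
    intro h0
    subst h0
    set A : Finset K := (X ^ (q ^ 2) - X : K[X]).roots.toFinset with hA
    set B : K → Finset K := fun c => (X ^ q + X - C c : K[X]).roots.toFinset with hB
    have hdegA : (X ^ (q ^ 2) - X : K[X]).natDegree = q ^ 2 := by
      compute_degree!
      · simp [show ¬(1 = q ^ 2) by nlinarith]
      · nlinarith
    have hdegB : ∀ c : K, (X ^ q + X - C c : K[X]).natDegree = q := by
      intro c
      compute_degree!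
      · simp [show ¬(1 = q) by omega, show ¬(q = 0) by omega]
      · omega
    have hAne : (X ^ (q ^ 2) - X : K[X]) ≠ 0 := fun h => by simp [h] at hdegA; nlinarith
    have hBne : ∀ c : K, (X ^ q + X - C c : K[X]) ≠ 0 := fun c h => by
      have := hdegB c; simp [h] at this; omega
    have hmemA : ∀ x : K, x ∈ A ↔ x ^ (q ^ 2) = x := by
      intro x
      simp only [hA, Multiset.mem_toFinset, mem_roots hAne, IsRoot.def, eval_sub, eval_pow,
        eval_X, sub_eq_zero]
    have hmemB : ∀ c z : K, z ∈ B c ↔ z ^ q + z = c := by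
      intro c z
      simp only [hB, Multiset.mem_toFinset, mem_roots (hBne c), IsRoot.def, eval_sub, eval_add,
        eval_pow, eval_X, eval_C, sub_eq_zero]
    set T : Finset (K × K) := A.biUnion fun x => (B (x ^ (q + 1))).image fun z => (x, z) with hT
    have hmemT : ∀ xz : K × K, xz ∈ T ↔ xz.1 ∈ A ∧ xz.2 ∈ B (xz.1 ^ (q + 1)) := by
      rintro ⟨x, z⟩
      simp only [hT, Finset.mem_biUnion, Finset.mem_image, Prod.mk.injEq]
      constructor
      · rintro ⟨a, ha, b, hb, rfl, rfl⟩; exact ⟨ha, hb⟩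
      · rintro ⟨ha, hb⟩; exact ⟨x, ha, z, hb, rfl, rfl⟩
    have hSet : {xz : K × K | xz.2 ^ q + xz.2 = xz.1 ^ (q + 1) ∧ xz.1 ^ (q ^ 2) = xz.1 ∧
        xz.2 ^ (q ^ 2) = xz.2 + 0} = ↑T := by
      ext ⟨x, z⟩
      simp only [Set.mem_setOf_eq, Finset.coe_mem, Finset.mem_coe, hmemT, hmemA, hmemB,
        add_zero]
      constructor
      · rintro ⟨h1, h2, _⟩; exact ⟨h2, h1⟩
      · rintro ⟨h2, h1⟩
        refine ⟨h1, h2, ?_⟩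
        have hz : z ^ q = x ^ (q + 1) - z := by rw [← h1]; ring
        calc z ^ (q ^ 2) = (z ^ q) ^ q := by rw [← pow_mul, pow_two]
          _ = (x ^ (q + 1)) ^ q - z ^ q := by rw [hz, frob_sub, hz]
          _ = x ^ ((q + 1) * q) - z ^ q := by rw [pow_mul]
          _ = x ^ (q + 1) - z ^ q := by rw [hxpow x h2]
          _ = x ^ (q + 1) - (x ^ (q + 1) - z) := by rw [hz]
          _ = z := by ring
    rw [hSet]
    refine ⟨T.finite_toSet, ?_⟩
    rw [Set.ncard_coe_finset]
    have hcardB : ∀ c : K, (B c).card = q := fun c => by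
      have hsep : (X ^ q + X - C c : K[X]).Separable := by
        have hder : derivative (X ^ q + X - C c : K[X]) = 1 := by
          simp [derivative_X_pow, hqK]
        rw [Polynomial.Separable, hder]; exact isCoprime_one_right
      rw [hB]; rw [aux_card_roots _ hsep, hdegB]
    have hcardA : A.card = q ^ 2 := by
      have hsep : (X ^ (q ^ 2) - X : K[X]).Separable := by
        have hder : derivative (X ^ (q ^ 2) - X : K[X]) = -1 := by
          have : ((q ^ 2 : ℕ) : K) = 0 := by push_cast [hqK]; ring
          simp [derivative_X_pow, this]
        rw [Polynomial.Separable, hder]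
        exact (isCoprime_one_right).neg_right
      rw [hA, aux_card_roots _ hsep, hdegA]
    rw [hT, Finset.card_biUnion]
    · have : ∀ x ∈ A, ((B (x ^ (q + 1))).image fun z => (x, z)).card = q := by
        intro x _
        rw [Finset.card_image_of_injective _ (fun a b h => (Prod.mk.injEq _ _ _ _).mp h |>.2),
          hcardB]
      rw [Finset.sum_congr rfl this, Finset.sum_const, smul_eq_mul, hcardA]
      ring
    · intro x _ y _ hxy
      rw [Function.onFun, Finset.disjoint_left]
      rintro ⟨a, b⟩ ha hb
      simp only [Finset.mem_image, Prod.mk.injEq] at ha hb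
      obtain ⟨_, _, rfl, rfl⟩ := ha
      obtain ⟨_, _, h, _⟩ := hb
      exact hxy h.symm
  · -- η ≠ 0 case
    intro hne
    ext ⟨x, z⟩
    simp only [Set.mem_setOf_eq, Set.mem_empty_iff_false, iff_false, not_and]
    intro h1 h2 h3
    apply hne
    have e1 : z ^ (q ^ 2) + z ^ q = x ^ ((q + 1) * q) := by
      have h := congrArg (· ^ q) h1
      rw [frob_add] at h
      calc z ^ (q ^ 2) + z ^ q = (z ^ q) ^ q + z ^ q := by rw [← pow_mul, pow_two]
        _ = (x ^ (q + 1)) ^ q := by rw [← h]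
        _ = x ^ ((q + 1) * q) := by rw [pow_mul]
    rw [h3, hxpow x h2] at e1
    linear_combination e1 - h1
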